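/- Define the degree of a monomial of R_∞ by deg(x_{n,k}) = 2n − 2 − k, extended additively to products. For every integer d ≥ 3, if f ∈ R_∞^{(d)} is such that every monomial occurring in f has degree at most d − 2, and D_∞(f) = 0, then f = 0. (This is the algebraic form of the vanishing Ker(𝐃_d^d) = 0, which yields H_st^i(Γ_{∞,1}; Λ^d H̃_ℚ) = 0 for i < d with i ≡ d mod 2.) -/

import Mathlib

open MvPolynomial

noncomputable section

/-- The index set `{(n,k) : 2 ≤ n, 0 ≤ k ≤ n}` of the variables `x_{n,k}` of `R_∞`. -/
abbrev Idx : Type := {p : ℕ × ℕ // 2 ≤ p.1 ∧ p.2 ≤ p.1}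

/-- The polynomial ring `R_∞ = ℚ[x_{n,k} : n ≥ 2, 0 ≤ k ≤ n]`. -/
abbrev Rinf : Type := MvPolynomial Idx ℚ

/-- The variable `x_{n,k}` (and `0` for out-of-range indices, which never occur below). -/
def xv (n k : ℕ) : Rinf := if h : 2 ≤ n ∧ k ≤ n then X ⟨(n, k), h⟩ else 0

/-- The derivation `D_∞` with `D_∞(x_{n,k}) = x_{n,k−1}` for `1 ≤ k ≤ n` and
`D_∞(x_{n,0}) = 0`. -/
def Dinf : Derivation ℚ Rinf Rinf :=
  MvPolynomial.mkDerivation ℚ fun s : Idx =>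
    if s.1.2 = 0 then 0 else xv s.1.1 (s.1.2 - 1)

/-- The weight `wt(x_{n,k}) = k`. -/
def wt : Idx → ℕ := fun s => s.1.2

/-- `R_∞^{(d)}`: the `ℚ`-span of the monomials of weight `d`. -/
def W (d : ℕ) : Submodule ℚ Rinf := weightedHomogeneousSubmodule ℚ wt d

/-- The degree `deg(x_{n,k}) = 2n − 2 − k` of a variable. -/
def degv : Idx → ℕ := fun s => 2 * s.1.1 - 2 - s.1.2

namespace Stmt11

/-- ℤ-valued weight `k`. -/
def wtZ : Idx → ℤ := fun s => (s.1.2 : ℤ)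

/-- ℤ-valued coweight `n − k`. -/
def cwZ : Idx → ℤ := fun s => (s.1.1 : ℤ) - (s.1.2 : ℤ)

/-- ℕ-valued coweight `n − k`. -/
def cw : Idx → ℕ := fun s => s.1.1 - s.1.2

/-- The value of the raising operator on the variable `x_{n,k}`. -/
def Eval : Idx → Rinf := fun s =>
  (((s.1.2 : ℚ) + 1) * ((s.1.1 : ℚ) - (s.1.2 : ℚ))) • xv s.1.1 (s.1.2 + 1)

/-- The raising derivation `E`. -/
def Ed : Derivation ℚ Rinf Rinf := MvPolynomial.mkDerivation ℚ Eval

/-- The eigenvalue function of `H = [E, D]`. -/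
def Hc : Idx → ℚ := fun s => 2 * (s.1.2 : ℚ) - (s.1.1 : ℚ)

/-- The Cartan derivation `H`. -/
def Hd : Derivation ℚ Rinf Rinf := MvPolynomial.mkDerivation ℚ fun s => Hc s • X s

lemma xv_in {n k : ℕ} (h2 : 2 ≤ n) (hk : k ≤ n) : xv n k = X ⟨(n, k), ⟨h2, hk⟩⟩ :=
  dif_pos ⟨h2, hk⟩

lemma sub_single_add {v : Idx →₀ ℕ} {i : Idx} (hi : i ∈ v.support) :
    (v - Finsupp.single i 1) + Finsupp.single i 1 = v := by
  have hvi := Finsupp.mem_support_iff.mp hi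
  ext j
  simp only [Finsupp.coe_add, Finsupp.coe_tsub, Pi.add_apply, Pi.sub_apply,
    Finsupp.single_apply]
  by_cases h : i = j
  · subst h
    rw [if_pos rfl]
    omega
  · rw [if_neg h]
    omega

lemma weight_single {M : Type*} [AddCommMonoid M] (w : Idx → M) (i : Idx) :
    Finsupp.weight w (Finsupp.single i 1) = w i := by
  rw [Finsupp.weight_apply, Finsupp.sum_single_index (by simp), one_smul]

lemma weight_sub_single {M : Type*} [AddCommMonoid M] (w : Idx → M) {v : Idx →₀ ℕ} {i : Idx}
    (hi : i ∈ v.support) :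
    Finsupp.weight w (v - Finsupp.single i 1) + w i = Finsupp.weight w v := by
  conv_rhs => rw [← sub_single_add hi]
  rw [map_add, weight_single]

/-- A derivation whose generator values shift the weighted degree by `c` maps
weighted-homogeneous polynomials of degree `a` to ones of degree `a + c`. -/
lemma mkDerivation_isWeightedHomogeneous {M : Type*} [AddCommMonoid M]
    (w : Idx → M) (c : M) (g : Idx → Rinf)
    (hg : ∀ s, (g s).IsWeightedHomogeneous w (w s + c))
    {φ : Rinf} {a : M} (hφ : φ.IsWeightedHomogeneous w a) :
    (MvPolynomial.mkDerivation ℚ g φ).IsWeightedHomogeneous w (a + c) := by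
  rw [← mem_weightedHomogeneousSubmodule]
  have hφs : MvPolynomial.mkDerivation ℚ g φ =
      ∑ v ∈ φ.support, MvPolynomial.mkDerivation ℚ g (monomial v (coeff v φ)) := by
    conv_lhs => rw [φ.as_sum]
    exact map_sum _ _ _
  rw [hφs]
  apply Submodule.sum_mem
  intro v hv
  rw [mkDerivation_monomial]
  apply Submodule.smul_mem
  rw [Finsupp.sum]
  apply Submodule.sum_mem
  intro i hi
  have hva : Finsupp.weight w v = a := hφ (Finsupp.mem_support_iff.mp hv)
  have h1 : (monomial (v - Finsupp.single i 1) ((v i : ℚ))).IsWeightedHomogeneous w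
      (Finsupp.weight w (v - Finsupp.single i 1)) := isWeightedHomogeneous_monomial _ _ _ rfl
  have h2 := (h1.mul (hg i))
  rw [mem_weightedHomogeneousSubmodule, smul_eq_mul]
  convert h2 using 1
  rw [← add_assoc, weight_sub_single w hi, hva]

/-- A derivation with `D X_s = c s • X_s` acts as `μ` on polynomials all of whose monomials
have total `c`-value `μ`. -/
lemma mkDerivation_eigen (c : Idx → ℚ) (φ : Rinf) (μ : ℚ)
    (hφ : ∀ v ∈ φ.support, (Finsupp.sum v fun s e => (e : ℚ) * c s) = μ) :
    MvPolynomial.mkDerivation ℚ (fun s => c s • X s) φ = μ • φ := by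
  conv_lhs => rw [φ.as_sum]
  conv_rhs => rw [φ.as_sum]
  rw [map_sum, Finset.smul_sum]
  refine Finset.sum_congr rfl fun v hv => ?_
  rw [mkDerivation_monomial, ← hφ v hv]
  have step : (Finsupp.sum v fun i k =>
      monomial (v - Finsupp.single i 1) ((k : ℚ)) • (c i • X i)) =
      (Finsupp.sum v fun s e => (e : ℚ) * c s) • (monomial v (1 : ℚ)) := by
    rw [Finsupp.sum, Finsupp.sum, Finset.sum_smul]
    refine Finset.sum_congr rfl fun i hi => ?_
    have hXi : (X i : Rinf) = monomial (Finsupp.single i 1) 1 := rfl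
    rw [smul_eq_mul, mul_smul_comm, hXi, monomial_mul, sub_single_add hi, mul_one,
      smul_monomial, smul_monomial, smul_eq_mul, smul_eq_mul, mul_one, mul_comm]
  rw [step, smul_smul, mul_comm (coeff v φ), ← smul_smul, smul_monomial, smul_eq_mul,
    mul_one]

lemma isWH_zero {M : Type*} [AddCommMonoid M] (w : Idx → M) (m : M) :
    (0 : Rinf).IsWeightedHomogeneous w m := by
  intro v hv
  simp at hv

lemma isWH_smul_X {M : Type*} [AddCommMonoid M] (w : Idx → M) (q : ℚ) (i : Idx) {m : M}
    (hm : w i = m) : ((q • X i : Rinf)).IsWeightedHomogeneous w m := by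
  subst hm
  rw [← mem_weightedHomogeneousSubmodule]
  exact Submodule.smul_mem _ _ (isWeightedHomogeneous_X ℚ w i)

/-- Homogeneity of the generator values of `E`. -/
lemma Eval_wtZ (s : Idx) : (Eval s).IsWeightedHomogeneous wtZ (wtZ s + 1) := by
  obtain ⟨⟨n, k⟩, h2, hk⟩ := s
  by_cases h : k + 1 ≤ n
  · rw [Eval, xv_in h2 h]
    exact isWH_smul_X _ _ _ (by show (((k + 1 : ℕ) : ℤ)) = (k : ℤ) + 1; omega)
  · rw [Eval]
    have : xv n (k + 1) = 0 := dif_neg (by omega)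
    rw [this, smul_zero]
    exact isWH_zero _ _

lemma Eval_cwZ (s : Idx) : (Eval s).IsWeightedHomogeneous cwZ (cwZ s + (-1)) := by
  obtain ⟨⟨n, k⟩, h2, hk⟩ := s
  by_cases h : k + 1 ≤ n
  · rw [Eval, xv_in h2 h]
    refine isWH_smul_X _ _ _ ?_
    show ((n : ℤ) - ((k + 1 : ℕ) : ℤ)) = ((n : ℤ) - (k : ℤ)) + (-1)
    omega
  · rw [Eval]
    have : xv n (k + 1) = 0 := dif_neg (by omega)
    rw [this, smul_zero]
    exact isWH_zero _ _

/-- Homogeneity of the generator values of `D`. -/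
lemma Dval_wtZ (s : Idx) :
    ((if s.1.2 = 0 then 0 else xv s.1.1 (s.1.2 - 1)) : Rinf).IsWeightedHomogeneous wtZ
      (wtZ s + (-1)) := by
  obtain ⟨⟨n, k⟩, h2, hk⟩ := s
  show ((if k = 0 then 0 else xv n (k - 1)) : Rinf).IsWeightedHomogeneous wtZ ((k : ℤ) + (-1))
  by_cases h : k = 0
  · simp only [h, if_pos]
    exact isWH_zero _ _
  · rw [if_neg h, xv_in h2 (show k - 1 ≤ n by omega)]
    have hthis := isWeightedHomogeneous_X ℚ wtZ
      (⟨(n, k - 1), ⟨h2, show k - 1 ≤ n by omega⟩⟩ : Idx)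
    have e : wtZ (⟨(n, k - 1), ⟨h2, show k - 1 ≤ n by omega⟩⟩ : Idx) = (k : ℤ) + (-1) := by
      show ((k - 1 : ℕ) : ℤ) = (k : ℤ) + (-1)
      omega
    rw [e] at hthis
    exact hthis

lemma Dval_cwZ (s : Idx) :
    ((if s.1.2 = 0 then 0 else xv s.1.1 (s.1.2 - 1)) : Rinf).IsWeightedHomogeneous cwZ
      (cwZ s + 1) := by
  obtain ⟨⟨n, k⟩, h2, hk⟩ := s
  show ((if k = 0 then 0 else xv n (k - 1)) : Rinf).IsWeightedHomogeneous cwZ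
    (((n : ℤ) - (k : ℤ)) + 1)
  by_cases h : k = 0
  · simp only [h, if_pos]
    exact isWH_zero _ _
  · rw [if_neg h, xv_in h2 (show k - 1 ≤ n by omega)]
    have hthis := isWeightedHomogeneous_X ℚ cwZ
      (⟨(n, k - 1), ⟨h2, show k - 1 ≤ n by omega⟩⟩ : Idx)
    have e : cwZ (⟨(n, k - 1), ⟨h2, show k - 1 ≤ n by omega⟩⟩ : Idx) =
        ((n : ℤ) - (k : ℤ)) + 1 := by
      show (n : ℤ) - ((k - 1 : ℕ) : ℤ) = ((n : ℤ) - (k : ℤ)) + 1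
      omega
    rw [e] at hthis
    exact hthis

lemma Dval_cw (s : Idx) :
    ((if s.1.2 = 0 then 0 else xv s.1.1 (s.1.2 - 1)) : Rinf).IsWeightedHomogeneous cw
      (cw s + 1) := by
  obtain ⟨⟨n, k⟩, h2, hk⟩ := s
  show ((if k = 0 then 0 else xv n (k - 1)) : Rinf).IsWeightedHomogeneous cw ((n - k) + 1)
  by_cases h : k = 0
  · simp only [h, if_pos]
    exact isWH_zero _ _
  · rw [if_neg h, xv_in h2 (show k - 1 ≤ n by omega)]
    have hthis := isWeightedHomogeneous_X ℚ cw
      (⟨(n, k - 1), ⟨h2, show k - 1 ≤ n by omega⟩⟩ : Idx)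
    have e : cw (⟨(n, k - 1), ⟨h2, show k - 1 ≤ n by omega⟩⟩ : Idx) = (n - k) + 1 := by
      show n - (k - 1) = (n - k) + 1
      omega
    rw [e] at hthis
    exact hthis

/-- `[E, D] = H`. -/
lemma bracket_EF : ⁅Ed, Dinf⁆ = Hd := by
  apply derivation_ext
  intro s
  obtain ⟨⟨n, k⟩, h2, hk⟩ := s
  rw [Derivation.commutator_apply]
  show Ed (Dinf (X _)) - Dinf (Ed (X _)) = Hd (X _)
  rw [show Dinf (X (⟨(n, k), ⟨h2, hk⟩⟩ : Idx)) =
        (if k = 0 then 0 else xv n (k - 1)) from mkDerivation_X _ _ _,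
      show Ed (X (⟨(n, k), ⟨h2, hk⟩⟩ : Idx)) = Eval ⟨(n, k), ⟨h2, hk⟩⟩ from mkDerivation_X _ _ _,
      show Hd (X (⟨(n, k), ⟨h2, hk⟩⟩ : Idx)) =
        Hc ⟨(n, k), ⟨h2, hk⟩⟩ • X ⟨(n, k), ⟨h2, hk⟩⟩ from mkDerivation_X _ _ _]
  rcases Nat.eq_zero_or_pos k with hk0 | hkpos
  · subst hk0
    rw [if_pos rfl, map_zero, Eval]
    simp only
    rw [xv_in h2 (by omega), Derivation.map_smul,
      show Dinf (X (⟨(n, 0 + 1), _⟩ : Idx)) = (if 0 + 1 = 0 then 0 else xv n (0 + 1 - 1))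
        from mkDerivation_X _ _ _, if_neg (by omega)]
    rw [xv_in h2 (by omega)]
    rw [zero_sub, ← neg_smul]
    congr 1
    show -((((0 : ℕ) : ℚ) + 1) * ((n : ℚ) - ((0 : ℕ) : ℚ))) = 2 * ((0 : ℕ) : ℚ) - (n : ℚ)
    push_cast
    ring
  · rcases eq_or_lt_of_le hk with hkn | hkn
    · -- k = n
      rw [if_neg (by omega), xv_in h2 (by omega),
        show Ed (X (⟨(n, k - 1), _⟩ : Idx)) = Eval ⟨(n, k - 1), _⟩ from mkDerivation_X _ _ _,
        Eval, Eval]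
      simp only
      have e1 : k - 1 + 1 = k := by omega
      have e2 : xv n (k + 1) = 0 := dif_neg (by omega)
      rw [e1, e2, smul_zero, map_zero, sub_zero, xv_in h2 hk]
      congr 1
      show (((k - 1 : ℕ) : ℚ) + 1) * ((n : ℚ) - ((k - 1 : ℕ) : ℚ)) =
        2 * (k : ℚ) - (n : ℚ)
      have : ((k - 1 : ℕ) : ℚ) = (k : ℚ) - 1 := by
        push_cast [Nat.cast_sub (by omega : 1 ≤ k)]; ring
      have hkn' : k = n := hkn
      rw [this, ← hkn']
      ring
    · -- 0 < k < n
      rw [if_neg (by omega), xv_in h2 (by omega),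
        show Ed (X (⟨(n, k - 1), _⟩ : Idx)) = Eval ⟨(n, k - 1), _⟩ from mkDerivation_X _ _ _,
        Eval, Eval]
      simp only
      have e1 : k - 1 + 1 = k := by omega
      rw [e1, xv_in h2 hk, xv_in h2 (by omega), Derivation.map_smul,
        show Dinf (X (⟨(n, k + 1), _⟩ : Idx)) = (if k + 1 = 0 then 0 else xv n (k + 1 - 1))
          from mkDerivation_X _ _ _, if_neg (by omega)]
      have e3 : k + 1 - 1 = k := by omega
      rw [e3, xv_in h2 hk, ← sub_smul]
      congr 1
      show (((k - 1 : ℕ) : ℚ) + 1) * ((n : ℚ) - ((k - 1 : ℕ) : ℚ)) -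
          ((k : ℚ) + 1) * ((n : ℚ) - (k : ℚ)) = 2 * (k : ℚ) - (n : ℚ)
      have : ((k - 1 : ℕ) : ℚ) = (k : ℚ) - 1 := by
        push_cast [Nat.cast_sub (by omega : 1 ≤ k)]; ring
      rw [this]
      ring

/-- `H` acts on bihomogeneous polynomials as the scalar `a − b`. -/
lemma Hd_apply {a b : ℤ} {φ : Rinf} (ha : φ.IsWeightedHomogeneous wtZ a)
    (hb : φ.IsWeightedHomogeneous cwZ b) :
    Hd φ = (((a : ℚ) - (b : ℚ))) • φ := by
  apply mkDerivation_eigen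
  intro v hv
  have h1 := ha (Finsupp.mem_support_iff.mp hv)
  have h2 := hb (Finsupp.mem_support_iff.mp hv)
  rw [Finsupp.weight_apply, Finsupp.sum] at h1 h2
  rw [Finsupp.sum]
  have key : ∀ s ∈ v.support, (v s : ℚ) * Hc s =
      (((v s • wtZ s : ℤ) : ℚ)) - (((v s • cwZ s : ℤ) : ℚ)) := by
    intro s _
    simp only [Hc, wtZ, cwZ, smul_eq_mul, nsmul_eq_mul]
    push_cast
    ring
  rw [Finset.sum_congr rfl key, Finset.sum_sub_distrib, ← Int.cast_sum, ← Int.cast_sum,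
    h1, h2]

/-- Iterates of `E`. -/
def itE : ℕ → Rinf → Rinf
  | 0, p => p
  | m + 1, p => Ed (itE m p)

lemma cwZ_neg_eq_zero {b : ℤ} (hb : b < 0) {φ : Rinf}
    (h : φ.IsWeightedHomogeneous cwZ b) : φ = 0 := by
  by_contra h0
  obtain ⟨v, hv⟩ := support_nonempty.mpr h0
  have h1 := h (Finsupp.mem_support_iff.mp hv)
  have h2 : 0 ≤ Finsupp.weight cwZ v := by
    rw [Finsupp.weight_apply, Finsupp.sum]
    apply Finset.sum_nonneg
    intro s _
    have hs : (s.1.2 : ℤ) ≤ (s.1.1 : ℤ) := by exact_mod_cast s.2.2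
    rw [nsmul_eq_mul]
    apply mul_nonneg (by positivity)
    simp only [cwZ]
    omega
  omega

/-- The key sl₂ lemma: a bihomogeneous element of weight `a` and coweight `b < a`,
killed by `D`, is zero. -/
lemma keylem {a b : ℤ} (hb : 0 ≤ b) (hab : b < a) {g : Rinf}
    (hga : g.IsWeightedHomogeneous wtZ a) (hgb : g.IsWeightedHomogeneous cwZ b)
    (hker : Dinf g = 0) : g = 0 := by
  have hhom : ∀ m : ℕ, (itE m g).IsWeightedHomogeneous wtZ (a + m) ∧
      (itE m g).IsWeightedHomogeneous cwZ (b - m) := by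
    intro m
    induction m with
    | zero => simpa using ⟨hga, hgb⟩
    | succ m ih =>
      constructor
      · have h := mkDerivation_isWeightedHomogeneous wtZ 1 Eval Eval_wtZ ih.1
        have he : (a + (m : ℤ)) + 1 = a + ((m + 1 : ℕ) : ℤ) := by push_cast; ring
        rw [he] at h
        exact h
      · have h := mkDerivation_isWeightedHomogeneous cwZ (-1) Eval Eval_cwZ ih.2
        have he : (b - (m : ℤ)) + (-1) = b - ((m + 1 : ℕ) : ℤ) := by push_cast; ring
        rw [he] at h
        exact h
  have hcomm : ∀ m : ℕ, Dinf (itE (m + 1) g) =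
      (-(((m : ℚ) + 1) * ((a : ℚ) - (b : ℚ)) + (m : ℚ) * ((m : ℚ) + 1))) • itE m g := by
    intro m
    induction m with
    | zero =>
      have hbr := congrArg (fun D : Derivation ℚ Rinf Rinf => D g) bracket_EF
      simp only [Derivation.commutator_apply] at hbr
      rw [Hd_apply hga hgb, hker, map_zero] at hbr
      have : Dinf (Ed g) = -(((a : ℚ) - (b : ℚ))) • g := by
        rw [neg_smul, ← hbr]
        abel
      rw [show itE 1 g = Ed g from rfl, this]
      congr 1
      push_cast
      ring
    | succ m ih =>
      have hbr := congrArg (fun D : Derivation ℚ Rinf Rinf => D (itE (m + 1) g)) bracket_EF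
      simp only [Derivation.commutator_apply] at hbr
      rw [Hd_apply (hhom (m + 1)).1 (hhom (m + 1)).2, ih, Derivation.map_smul,
        show Ed (itE m g) = itE (m + 1) g from rfl] at hbr
      have h2 : Dinf (Ed (itE (m + 1) g)) =
          (-(((m : ℚ) + 1) * ((a : ℚ) - (b : ℚ)) + (m : ℚ) * ((m : ℚ) + 1))) • itE (m + 1) g -
          ((((a + ((m + 1 : ℕ) : ℤ) : ℤ) : ℚ)) - (((b - ((m + 1 : ℕ) : ℤ) : ℤ) : ℚ))) •
            itE (m + 1) g := by
        rw [← hbr]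
        abel
      rw [show itE (m + 1 + 1) g = Ed (itE (m + 1) g) from rfl, h2, ← sub_smul]
      congr 1
      push_cast
      ring
  have hz : itE (b.toNat + 1) g = 0 := by
    apply cwZ_neg_eq_zero (b := b - ((b.toNat + 1 : ℕ) : ℤ)) _ (hhom (b.toNat + 1)).2
    omega
  have hdown : ∀ j : ℕ, itE (b.toNat + 1 - j) g = 0 := by
    intro j
    induction j with
    | zero => simpa using hz
    | succ j ih =>
      by_cases hj : b.toNat + 1 - j = 0
      · have h0 : b.toNat + 1 - (j + 1) = 0 := by omega
        rw [h0]
        rwa [hj] at ih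
      · set m := b.toNat - j with hm
        have h1 : b.toNat + 1 - j = m + 1 := by omega
        have h2 : b.toNat + 1 - (j + 1) = m := by omega
        rw [h2]
        have hc := hcomm m
        rw [← h1, ih, map_zero] at hc
        have hμ : (-(((m : ℚ) + 1) * ((a : ℚ) - (b : ℚ)) + (m : ℚ) * ((m : ℚ) + 1))) ≠ 0 := by
          have hab' : (1 : ℚ) ≤ (a : ℚ) - (b : ℚ) := by
            have : b + 1 ≤ a := hab
            have : ((b + 1 : ℤ) : ℚ) ≤ ((a : ℤ) : ℚ) := by exact_mod_cast this
            push_cast at this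
            linarith
          have hm0 : (0 : ℚ) ≤ (m : ℚ) := by positivity
          nlinarith
        have h4 := congrArg
          (fun x : Rinf =>
            (-(((m : ℚ) + 1) * ((a : ℚ) - (b : ℚ)) + (m : ℚ) * ((m : ℚ) + 1)))⁻¹ • x) hc
        simp only [smul_zero, smul_smul, inv_mul_cancel₀ hμ, one_smul] at h4
        exact h4.symm
  have hfin := hdown (b.toNat + 1)
  simpa [itE] using hfin

/-- Cast a ℕ-weighted homogeneity statement to a ℤ-weighted one. -/
lemma isWH_int {w : Idx → ℕ} {wZ : Idx → ℤ} (hw : ∀ s, wZ s = ((w s : ℕ) : ℤ)) {φ : Rinf}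
    {n : ℕ} (h : φ.IsWeightedHomogeneous w n) : φ.IsWeightedHomogeneous wZ ((n : ℕ) : ℤ) := by
  intro v hv
  have h1 := h hv
  rw [Finsupp.weight_apply, Finsupp.sum] at h1 ⊢
  calc ∑ s ∈ v.support, v s • wZ s = ∑ s ∈ v.support, ((v s • w s : ℕ) : ℤ) := by
        refine Finset.sum_congr rfl fun s _ => ?_
        rw [hw s, nsmul_eq_mul, smul_eq_mul]
        push_cast
        ring
    _ = ((∑ s ∈ v.support, v s • w s : ℕ) : ℤ) := by rw [Nat.cast_sum]
    _ = ((n : ℕ) : ℤ) := by rw [h1]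

end Stmt11

open Stmt11 in
/-- For `d ≥ 3`, if `f ∈ R_∞^{(d)}` is such that every monomial occurring in `f` has degree
at most `d − 2`, and `D_∞(f) = 0`, then `f = 0`. -/
theorem statement11 (d : ℕ) (hd : 3 ≤ d) (f : Rinf) (hf : f ∈ W d)
    (hdeg : ∀ m ∈ f.support, (m.sum fun s e => e * degv s) ≤ d - 2)
    (hker : Dinf f = 0) : f = 0 := by
  classical
  have hfw : f.IsWeightedHomogeneous wt d := hf
  have hfin := weightedHomogeneousComponent_finsupp (w := cw) (φ := f)
  set T := hfin.toFinset with hT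
  have hsum : ∑ i ∈ T, weightedHomogeneousComponent cw i f = f := by
    rw [← finsum_eq_sum _ hfin, finsum_weightedHomogeneousComponent]
  have hcomp : ∀ i : ℕ, weightedHomogeneousComponent cw i f = 0 := by
    intro i
    set fi := weightedHomogeneousComponent cw i f with hfi
    by_cases h0 : fi = 0
    · exact h0
    have hsupp : ∀ v, coeff v fi ≠ 0 → coeff v f ≠ 0 := by
      intro v hv
      rw [hfi, coeff_weightedHomogeneousComponent] at hv
      split_ifs at hv with h
      · exact hv
      · exact absurd rfl hv
    have hwt : fi.IsWeightedHomogeneous wt d := fun v hv => hfw (hsupp v hv)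
    have hcw : fi.IsWeightedHomogeneous cw i :=
      weightedHomogeneousComponent_isWeightedHomogeneous i f
    -- `i ≤ d − 2`
    obtain ⟨v, hv⟩ := support_nonempty.mpr h0
    have hvf : v ∈ f.support := Finsupp.mem_support_iff.mpr
      (hsupp v (Finsupp.mem_support_iff.mp hv))
    have hdv := hdeg v hvf
    have hwv : Finsupp.weight cw v = i := hcw (Finsupp.mem_support_iff.mp hv)
    have hile : i ≤ d - 2 := by
      rw [← hwv]
      calc Finsupp.weight cw v = ∑ s ∈ v.support, v s • cw s := by
            rw [Finsupp.weight_apply, Finsupp.sum]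
        _ ≤ ∑ s ∈ v.support, v s * degv s := by
            refine Finset.sum_le_sum fun s _ => ?_
            rw [smul_eq_mul]
            refine Nat.mul_le_mul_left _ ?_
            obtain ⟨⟨n, k⟩, h2, hk⟩ := s
            show n - k ≤ 2 * n - 2 - k
            omega
        _ = v.sum fun s e => e * degv s := by rw [Finsupp.sum]
        _ ≤ d - 2 := hdv
    -- `D f_i = 0`
    have hDfi : Dinf fi = 0 := by
      have hhomD : ∀ j : ℕ,
          (Dinf (weightedHomogeneousComponent cw j f)).IsWeightedHomogeneous cw (j + 1) :=
        fun j => mkDerivation_isWeightedHomogeneous cw 1 _ Dval_cw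
          (weightedHomogeneousComponent_isWeightedHomogeneous j f)
      have h1 : (0 : Rinf) = ∑ j ∈ T, Dinf (weightedHomogeneousComponent cw j f) := by
        rw [← hker]
        conv_lhs => rw [← hsum]
        exact map_sum _ _ _
      have h2 := congrArg (weightedHomogeneousComponent cw (i + 1)) h1
      rw [map_zero, map_sum] at h2
      have h3 : ∀ j ∈ T, weightedHomogeneousComponent cw (i + 1)
          (Dinf (weightedHomogeneousComponent cw j f)) =
          if j = i then Dinf fi else 0 := by
        intro j _
        by_cases hji : j = i
        · subst hji
          rw [if_pos rfl, (hhomD j).weightedHomogeneousComponent_same]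
        · rw [if_neg hji]
          exact (hhomD j).weightedHomogeneousComponent_ne _
            (by omega)
      rw [Finset.sum_congr rfl h3] at h2
      by_cases hiT : i ∈ T
      · rw [Finset.sum_ite_eq' T i (fun _ => Dinf fi), if_pos hiT] at h2
        exact h2.symm
      · -- if `i ∉ T` then `f_i = 0`, contradiction with `h0`
        exfalso
        apply h0
        rw [hfi]
        have : weightedHomogeneousComponent cw i f ≠ 0 → i ∈ T := by
          intro hne
          rw [hT]
          exact (Set.Finite.mem_toFinset hfin).mpr hne
        by_contra hne
        exact hiT (this hne)
    -- apply the key lemma over ℤ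
    have hwtZ : fi.IsWeightedHomogeneous wtZ ((d : ℕ) : ℤ) :=
      isWH_int (fun s => rfl) hwt
    have hcwZ : fi.IsWeightedHomogeneous cwZ ((i : ℕ) : ℤ) := by
      refine isWH_int (fun s => ?_) hcw
      obtain ⟨⟨n, k⟩, h2, hk⟩ := s
      show (n : ℤ) - (k : ℤ) = ((n - k : ℕ) : ℤ)
      omega
    exact keylem (by positivity) (by exact_mod_cast Nat.lt_of_le_of_lt hile (by omega))
      hwtZ hcwZ hDfi
  rw [← hsum]
  exact Finset.sum_eq_zero fun i _ => hcomp i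

end
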